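/- arXiv:2308.01914 — 5 statements merged into one kernel-verified Lean document; each statement's English description precedes it below -/
import Mathlib

section
/- If x* is a local optimal solution of the unconstrained fuzzy problem min_{x∈T} H(x), H is gH-differentiable at x*, and Ŝ(x*) denotes the cone of feasible directions of T at x*, then Ĥ(x*) ∩ Ŝ(x*) = ∅, where Ĥ(x*) = {τ ∈ ℝⁿ : τᵀ∇H(x*) ≺ 0̃}. -/
open Set

/-- at a local optimum `xs` of the unconstrained fuzzy problem with `H`
gH-differentiable at `xs` (encoded by its descent property), the descent cone
`Ĥ(xs) = {τ : τᵀ∇H(xs) ≺ 0̃}` and the cone of feasible directions `Ŝ(xs)` are disjoint. -/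
theorem fuzzy_descent_feasible_disjoint {n : ℕ} (T : Set (Fin n → ℝ))
    (Hlo Hhi : (Fin n → ℝ) → ℝ → ℝ) (Glo Ghi : Fin n → ℝ → ℝ)
    (xs : Fin n → ℝ) (hxs : xs ∈ T)
    (hG : ∀ ϱ ∈ Icc (0:ℝ) 1, ∀ i, Glo i ϱ ≤ Ghi i ϱ)
    -- descent property from gH-differentiability of H at xs
    (hdesc : ∀ τ : Fin n → ℝ,
      (∀ ϱ ∈ Icc (0:ℝ) 1,
        (∑ i, min (τ i * Glo i ϱ) (τ i * Ghi i ϱ)) < 0 ∧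
        (∑ i, max (τ i * Glo i ϱ) (τ i * Ghi i ϱ)) < 0) →
      ∃ δ > (0:ℝ), ∀ κ ∈ Ioo (0:ℝ) δ, ∀ ϱ ∈ Icc (0:ℝ) 1,
        Hlo (xs + κ • τ) ϱ < Hlo xs ϱ ∧ Hhi (xs + κ • τ) ϱ < Hhi xs ϱ)
    -- xs is a local optimal solution
    (hopt : ∃ ε > (0:ℝ), ∀ x ∈ T, ‖x - xs‖ < ε →
      ¬ (∀ ϱ ∈ Icc (0:ℝ) 1, Hlo x ϱ < Hlo xs ϱ ∧ Hhi x ϱ < Hhi xs ϱ)) :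
    ∀ τ : Fin n → ℝ, ¬ (
      (∀ ϱ ∈ Icc (0:ℝ) 1,
        (∑ i, min (τ i * Glo i ϱ) (τ i * Ghi i ϱ)) < 0 ∧
        (∑ i, max (τ i * Glo i ϱ) (τ i * Ghi i ϱ)) < 0) ∧
      (∃ δ > (0:ℝ), ∀ κ ∈ Ioo (0:ℝ) δ, xs + κ • τ ∈ T)) := by
  rintro τ ⟨hτ, δ2, hδ2, hfeas⟩
  obtain ⟨δ1, hδ1, hdec⟩ := hdesc τ hτ
  obtain ⟨ε, hε, hloc⟩ := hopt
  set κ : ℝ := min (min δ1 δ2 / 2) (ε / (2 * (‖τ‖ + 1))) with hκdef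
  have hτpos : (0:ℝ) < ‖τ‖ + 1 := by positivity
  have hκpos : 0 < κ := by
    apply lt_min
    · have := lt_min hδ1 hδ2; linarith [lt_min hδ1 hδ2]
    · positivity
  have hκ1 : κ < δ1 := lt_of_le_of_lt (min_le_left _ _)
    (by have := min_le_left δ1 δ2; linarith)
  have hκ2 : κ < δ2 := lt_of_le_of_lt (min_le_left _ _)
    (by have := min_le_right δ1 δ2; linarith)
  have hmem : xs + κ • τ ∈ T := hfeas κ ⟨hκpos, hκ2⟩
  have hnorm : ‖(xs + κ • τ) - xs‖ < ε := by
    have h1 : (xs + κ • τ) - xs = κ • τ := by abel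
    rw [h1, norm_smul, Real.norm_eq_abs, abs_of_pos hκpos]
    have hκle : κ ≤ ε / (2 * (‖τ‖ + 1)) := min_le_right _ _
    have h2 : κ * ‖τ‖ ≤ (ε / (2 * (‖τ‖ + 1))) * (‖τ‖ + 1) := by
      apply mul_le_mul hκle (by linarith [norm_nonneg τ]) (norm_nonneg τ)
      positivity
    have h3 : (ε / (2 * (‖τ‖ + 1))) * (‖τ‖ + 1) = ε / 2 := by
      field_simp
    linarith
  exact hloc _ hmem hnorm (hdec κ ⟨hκpos, hκ1⟩)
end

section
/- Mutual exclusivity in the fuzzy Gordan theorem for matrices: if there exists y ∈ ℝˢ such that for every column j of the s×n interval matrix M_ϱ (ϱ ∈ [0,1] fixed) the interval (Mᵀ_ϱ y)_j = Σ_i y_i [m_{ij}]^ϱ has both endpoints strictly negative, then there is no nonzero x ∈ ℝⁿ with x_j ≥ 0 for all j such that 0 ∈ (M_ϱ x)_i = Σ_j x_j [m_{ij}]^ϱ for every row i. -/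
open Set

/-- mutual exclusivity in the interval/fuzzy Gordan theorem for
matrices, at a fixed level. If `y ∈ ℝˢ` makes every column combination
`(Mᵀy)_j = Σ_i y_i [alo i j, ahi i j]` strictly negative (both endpoints `< 0`),
then there is no nonzero `x ≥ 0` with `0 ∈ (M x)_i` for every row `i`. -/
theorem interval_gordan_exclusive {s n : ℕ} (alo ahi : Fin s → Fin n → ℝ)
    (h : ∀ i j, alo i j ≤ ahi i j) (y : Fin s → ℝ)
    (hy : ∀ j, (∑ i, min (y i * alo i j) (y i * ahi i j)) < 0 ∧
      (∑ i, max (y i * alo i j) (y i * ahi i j)) < 0) :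
    ¬ ∃ x : Fin n → ℝ, x ≠ 0 ∧ (∀ j, 0 ≤ x j) ∧
      ∀ i, (∑ j, min (x j * alo i j) (x j * ahi i j)) ≤ 0 ∧
        0 ≤ (∑ j, max (x j * alo i j) (x j * ahi i j)) := by
  rintro ⟨x, hx0, hxnn, hxi⟩
  -- some coordinate of x is positive
  obtain ⟨j₀, hj₀⟩ : ∃ j, 0 < x j := by
    by_contra hc
    push_neg at hc
    exact hx0 (funext fun j => le_antisymm (hc j) (hxnn j))
  set L : Fin s → ℝ := fun i => ∑ j, x j * alo i j with hLdef
  set U : Fin s → ℝ := fun i => ∑ j, x j * ahi i j with hUdef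
  have hmin : ∀ i j, min (x j * alo i j) (x j * ahi i j) = x j * alo i j := fun i j =>
    min_eq_left (mul_le_mul_of_nonneg_left (h i j) (hxnn j))
  have hmax : ∀ i j, max (x j * alo i j) (x j * ahi i j) = x j * ahi i j := fun i j =>
    max_eq_right (mul_le_mul_of_nonneg_left (h i j) (hxnn j))
  have hL : ∀ i, L i ≤ 0 := by
    intro i
    have := (hxi i).1
    simpa [hLdef, hmin i] using this
  have hU : ∀ i, 0 ≤ U i := by
    intro i
    have := (hxi i).2
    simpa [hUdef, hmax i] using this
  have key1 : (0 : ℝ) ≤ ∑ i, max (y i * L i) (y i * U i) := by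
    apply Finset.sum_nonneg
    intro i _
    rcases le_or_gt 0 (y i) with hyi | hyi
    · exact le_trans (mul_nonneg hyi (hU i)) (le_max_right _ _)
    · have : 0 ≤ y i * L i := by nlinarith [hL i]
      exact le_trans this (le_max_left _ _)
  have key2 : ∀ i, max (y i * L i) (y i * U i) ≤
      ∑ j, x j * max (y i * alo i j) (y i * ahi i j) := by
    intro i
    apply max_le
    · have : y i * L i = ∑ j, x j * (y i * alo i j) := by
        rw [hLdef, Finset.mul_sum]; apply Finset.sum_congr rfl; intros; ring
      rw [this]
      exact Finset.sum_le_sum fun j _ =>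
        mul_le_mul_of_nonneg_left (le_max_left _ _) (hxnn j)
    · have : y i * U i = ∑ j, x j * (y i * ahi i j) := by
        rw [hUdef, Finset.mul_sum]; apply Finset.sum_congr rfl; intros; ring
      rw [this]
      exact Finset.sum_le_sum fun j _ =>
        mul_le_mul_of_nonneg_left (le_max_right _ _) (hxnn j)
  have key3 : (0 : ℝ) ≤ ∑ j, x j * ∑ i, max (y i * alo i j) (y i * ahi i j) := by
    have h1 : (0 : ℝ) ≤ ∑ i, ∑ j, x j * max (y i * alo i j) (y i * ahi i j) :=
      le_trans key1 (Finset.sum_le_sum fun i _ => key2 i)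
    calc (0 : ℝ) ≤ ∑ i, ∑ j, x j * max (y i * alo i j) (y i * ahi i j) := h1
      _ = ∑ j, x j * ∑ i, max (y i * alo i j) (y i * ahi i j) := by
          rw [Finset.sum_comm]
          exact Finset.sum_congr rfl fun j _ => (Finset.mul_sum _ _ _).symm
  have key4 : ∑ j, x j * ∑ i, max (y i * alo i j) (y i * ahi i j) < 0 := by
    have : ∑ j, x j * ∑ i, max (y i * alo i j) (y i * ahi i j) <
        ∑ j : Fin n, (0 : ℝ) := by
      apply Finset.sum_lt_sum
      · intro j _
        exact mul_nonpos_of_nonneg_of_nonpos (hxnn j) (hy j).2.le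
      · exact ⟨j₀, Finset.mem_univ j₀, mul_neg_of_pos_of_neg hj₀ (hy j₀).2⟩
    simpa using this
  linarith
end

section
/- Fuzzy KKT necessary condition under linear independence: in the Fritz-John setting, if additionally the fuzzy gradient vectors {∇Y_j(x*) : j ∈ Λ(x*)} are linearly independent (meaning: whenever real scalars ϑ_j satisfy 0 ∈ Σ_{j∈Λ(x*)} ϑ_j D_iY_{j,ϱ}(x*) for all coordinates i and all ϱ ∈ [0,1], then all ϑ_j = 0), then the Fritz-John multiplier κ₀ can be taken positive, and hence there exist κ_j ≥ 0, j ∈ Λ(x*), with 0 ∈ D_iH_ϱ(x*) + Σ_{j∈Λ(x*)} κ_j D_iY_{j,ϱ}(x*) for all i and all ϱ ∈ [0,1]. -/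
open Set

/-- fuzzy KKT necessary condition under linear independence. In the
Fritz-John setting (the Fritz-John multipliers exist), if the active fuzzy gradient
vectors `{∇Y_j(xs) : j ∈ Λ}` are linearly independent (whenever
`0 ∈ Σ_{j∈Λ} ϑ_j D_iY_{j,ϱ}(xs)` for all `i, ϱ`, all `ϑ_j = 0`), then multipliers
with `κ₀ = 1 > 0` exist: there are `κ_j ≥ 0` (`j ∈ Λ`) with
`0 ∈ D_iH_ϱ(xs) + Σ_{j∈Λ} κ_j D_iY_{j,ϱ}(xs)` for all `i` and `ϱ`. -/
theorem fuzzy_kkt_necessary {n s : ℕ}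
    (HGlo HGhi : Fin n → ℝ → ℝ)
    (YGlo YGhi : Fin s → Fin n → ℝ → ℝ)
    (Λ : Finset (Fin s))
    (hHG : ∀ i, ∀ ϱ ∈ Icc (0:ℝ) 1, HGlo i ϱ ≤ HGhi i ϱ)
    (hYG : ∀ j i, ∀ ϱ ∈ Icc (0:ℝ) 1, YGlo j i ϱ ≤ YGhi j i ϱ)
    -- Fritz-John condition (established at a local optimum)
    (hFJ : ∃ κ₀ : ℝ, ∃ κ : Fin s → ℝ,
      0 ≤ κ₀ ∧ (∀ j ∈ Λ, 0 ≤ κ j) ∧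
      ¬ (κ₀ = 0 ∧ ∀ j ∈ Λ, κ j = 0) ∧
      ∀ ϱ ∈ Icc (0:ℝ) 1, ∀ i,
        κ₀ * HGlo i ϱ + ∑ j ∈ Λ, κ j * YGlo j i ϱ ≤ 0 ∧
        0 ≤ κ₀ * HGhi i ϱ + ∑ j ∈ Λ, κ j * YGhi j i ϱ)
    -- linear independence of the active fuzzy gradients
    (hLI : ∀ ϑ : Fin s → ℝ,
      (∀ ϱ ∈ Icc (0:ℝ) 1, ∀ i,
        (∑ j ∈ Λ, min (ϑ j * YGlo j i ϱ) (ϑ j * YGhi j i ϱ)) ≤ 0 ∧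
        0 ≤ ∑ j ∈ Λ, max (ϑ j * YGlo j i ϱ) (ϑ j * YGhi j i ϱ)) →
      ∀ j ∈ Λ, ϑ j = 0) :
    ∃ κ : Fin s → ℝ, (∀ j ∈ Λ, 0 ≤ κ j) ∧
      ∀ ϱ ∈ Icc (0:ℝ) 1, ∀ i,
        HGlo i ϱ + ∑ j ∈ Λ, κ j * YGlo j i ϱ ≤ 0 ∧
        0 ≤ HGhi i ϱ + ∑ j ∈ Λ, κ j * YGhi j i ϱ := by
  obtain ⟨κ₀, κ, hκ₀, hκ, hnz, hineq⟩ := hFJ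
  have hκ₀pos : 0 < κ₀ := by
    rcases lt_or_eq_of_le hκ₀ with h | h
    · exact h
    · exfalso
      apply hnz
      refine ⟨h.symm, fun j hj => ?_⟩
      apply hLI κ
      · intro ϱ hϱ i
        have := hineq ϱ hϱ i
        rw [← h] at this
        simp only [zero_mul, zero_add] at this
        constructor
        · calc (∑ j ∈ Λ, min (κ j * YGlo j i ϱ) (κ j * YGhi j i ϱ))
              ≤ ∑ j ∈ Λ, κ j * YGlo j i ϱ :=
                Finset.sum_le_sum (fun j hj => min_le_left _ _)
          _ ≤ 0 := this.1
        · calc (0:ℝ) ≤ ∑ j ∈ Λ, κ j * YGhi j i ϱ := this.2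
          _ ≤ ∑ j ∈ Λ, max (κ j * YGlo j i ϱ) (κ j * YGhi j i ϱ) :=
                Finset.sum_le_sum (fun j hj => le_max_right _ _)
      · exact hj
  refine ⟨fun j => κ j / κ₀, fun j hj => div_nonneg (hκ j hj) hκ₀, fun ϱ hϱ i => ?_⟩
  have h := hineq ϱ hϱ i
  constructor
  · have := div_nonpos_of_nonpos_of_nonneg h.1 hκ₀
    rw [add_div, Finset.sum_div] at this
    calc HGlo i ϱ + ∑ j ∈ Λ, κ j / κ₀ * YGlo j i ϱ
        = κ₀ * HGlo i ϱ / κ₀ + ∑ j ∈ Λ, κ j * YGlo j i ϱ / κ₀ := by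
          rw [mul_comm κ₀, mul_div_assoc, div_self hκ₀pos.ne', mul_one]
          congr 1
          exact Finset.sum_congr rfl fun j _ => by ring
    _ ≤ 0 := this
  · have := div_nonneg h.2 hκ₀
    rw [add_div, Finset.sum_div] at this
    calc (0:ℝ) ≤ κ₀ * HGhi i ϱ / κ₀ + ∑ j ∈ Λ, κ j * YGhi j i ϱ / κ₀ := this
    _ = HGhi i ϱ + ∑ j ∈ Λ, κ j / κ₀ * YGhi j i ϱ := by
          rw [mul_comm κ₀, mul_div_assoc, div_self hκ₀pos.ne', mul_one]
          congr 1
          exact Finset.sum_congr rfl fun j _ => by ring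
end

section
/- Fuzzy KKT sufficient condition: let H, Y₁,...,Y_s : T → F_C be gH-differentiable convex fuzzy functions on an open convex set T, and suppose x* is feasible (Y_j(x*) ⪯ 0̃ for all j) and there exist κ_j ≥ 0 with κ_j Y_j(x*) = 0̃ for all j and, for all ϱ ∈ [0,1] and all coordinates i, 0 ∈ D_iH_ϱ(x*) + Σ_j κ_j D_iY_{j,ϱ}(x*). Then x* is an optimal solution: there is no feasible x with H(x) ≺ H(x*). -/
open Set

/-- fuzzy KKT sufficient condition. Let `H, Y_j` be gH-differentiable
convex fuzzy functions on an open convex `T` (convexity being used through the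
gradient inequality `(x - xs)ᵀ∇F(xs) ⪯ F(x) ⊖_gH F(xs)`, available as a lemma),
`xs` feasible, and suppose multipliers `κ_j ≥ 0` satisfy complementary slackness
`κ_j Y_j(xs) = 0̃` and stationarity `0 ∈ D_iH_ϱ(xs) + Σ_j κ_j D_iY_{j,ϱ}(xs)` for
all `i, ϱ`.  Then `xs` is optimal: no feasible `x` has `H(x) ≺ H(xs)`. -/
theorem fuzzy_kkt_sufficient {n s : ℕ} (T : Set (Fin n → ℝ))
    (hT : IsOpen T) (hTc : Convex ℝ T)
    (Hlo Hhi : (Fin n → ℝ) → ℝ → ℝ)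
    (Ylo Yhi : Fin s → (Fin n → ℝ) → ℝ → ℝ)
    (HGlo HGhi : Fin n → ℝ → ℝ)
    (YGlo YGhi : Fin s → Fin n → ℝ → ℝ)
    (xs : Fin n → ℝ) (hxsT : xs ∈ T)
    -- xs is feasible
    (hfeas : ∀ j, ∀ ϱ ∈ Icc (0:ℝ) 1, Ylo j xs ϱ ≤ 0 ∧ Yhi j xs ϱ ≤ 0)
    (κ : Fin s → ℝ) (hκ : ∀ j, 0 ≤ κ j)
    -- complementary slackness: κ_j Y_j(xs) = 0̃
    (hcs : ∀ j, κ j = 0 ∨ ∀ ϱ ∈ Icc (0:ℝ) 1, Ylo j xs ϱ = 0 ∧ Yhi j xs ϱ = 0)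
    -- stationarity
    (hstat : ∀ ϱ ∈ Icc (0:ℝ) 1, ∀ i,
      HGlo i ϱ + ∑ j, κ j * YGlo j i ϱ ≤ 0 ∧
      0 ≤ HGhi i ϱ + ∑ j, κ j * YGhi j i ϱ)
    -- gradient inequality for convex gH-differentiable H: (x-xs)ᵀ∇H(xs) ⪯ H(x) ⊖_gH H(xs)
    (hgradH : ∀ x ∈ T, ∀ ϱ ∈ Icc (0:ℝ) 1,
      (∑ i, min ((x i - xs i) * HGlo i ϱ) ((x i - xs i) * HGhi i ϱ)) ≤
        min (Hlo x ϱ - Hlo xs ϱ) (Hhi x ϱ - Hhi xs ϱ) ∧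
      (∑ i, max ((x i - xs i) * HGlo i ϱ) ((x i - xs i) * HGhi i ϱ)) ≤
        max (Hlo x ϱ - Hlo xs ϱ) (Hhi x ϱ - Hhi xs ϱ))
    -- gradient inequality for the convex gH-differentiable constraints
    (hgradY : ∀ j, ∀ x ∈ T, ∀ ϱ ∈ Icc (0:ℝ) 1,
      (∑ i, min ((x i - xs i) * YGlo j i ϱ) ((x i - xs i) * YGhi j i ϱ)) ≤
        min (Ylo j x ϱ - Ylo j xs ϱ) (Yhi j x ϱ - Yhi j xs ϱ) ∧
      (∑ i, max ((x i - xs i) * YGlo j i ϱ) ((x i - xs i) * YGhi j i ϱ)) ≤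
        max (Ylo j x ϱ - Ylo j xs ϱ) (Yhi j x ϱ - Yhi j xs ϱ)) :
    ¬ ∃ x ∈ T, (∀ j, ∀ ϱ ∈ Icc (0:ℝ) 1, Ylo j x ϱ ≤ 0 ∧ Yhi j x ϱ ≤ 0) ∧
      (∀ ϱ ∈ Icc (0:ℝ) 1, Hlo x ϱ < Hlo xs ϱ ∧ Hhi x ϱ < Hhi xs ϱ) := by

  rintro ⟨x, hxT, hxfeas, hxlt⟩
  have hϱ : (0:ℝ) ∈ Icc (0:ℝ) 1 := ⟨le_rfl, zero_le_one⟩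
  -- per-coordinate lower bound from stationarity
  have key : ∀ i, (0:ℝ) ≤
      max ((x i - xs i) * HGlo i 0) ((x i - xs i) * HGhi i 0)
      + ∑ j, κ j * max ((x i - xs i) * YGlo j i 0) ((x i - xs i) * YGhi j i 0) := by
    intro i
    obtain ⟨hL, hU⟩ := hstat 0 hϱ i
    have h1 : (0:ℝ) ≤ max ((x i - xs i) * (HGlo i 0 + ∑ j, κ j * YGlo j i 0))
        ((x i - xs i) * (HGhi i 0 + ∑ j, κ j * YGhi j i 0)) := by
      rcases le_or_gt 0 (x i - xs i) with hdi | hdi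
      · exact le_max_of_le_right (mul_nonneg hdi hU)
      · exact le_max_of_le_left (by nlinarith : (0:ℝ) ≤ (x i - xs i) * (HGlo i 0 + ∑ j, κ j * YGlo j i 0))
    refine h1.trans (max_le ?_ ?_)
    · rw [mul_add, Finset.mul_sum]
      refine add_le_add (le_max_left _ _) (Finset.sum_le_sum fun j _ => ?_)
      have e : (x i - xs i) * (κ j * YGlo j i 0) = κ j * ((x i - xs i) * YGlo j i 0) := by
        ring
      rw [e]
      exact mul_le_mul_of_nonneg_left (le_max_left _ _) (hκ j)
    · rw [mul_add, Finset.mul_sum]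
      refine add_le_add (le_max_right _ _) (Finset.sum_le_sum fun j _ => ?_)
      have e : (x i - xs i) * (κ j * YGhi j i 0) = κ j * ((x i - xs i) * YGhi j i 0) := by
        ring
      rw [e]
      exact mul_le_mul_of_nonneg_left (le_max_right _ _) (hκ j)
  have hsum : (0:ℝ) ≤
      (∑ i, max ((x i - xs i) * HGlo i 0) ((x i - xs i) * HGhi i 0))
      + ∑ j, κ j * ∑ i, max ((x i - xs i) * YGlo j i 0) ((x i - xs i) * YGhi j i 0) := by
    have h := Finset.sum_nonneg (fun i (_ : i ∈ Finset.univ) => key i)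
    calc (0:ℝ) ≤ ∑ i, (max ((x i - xs i) * HGlo i 0) ((x i - xs i) * HGhi i 0)
          + ∑ j, κ j * max ((x i - xs i) * YGlo j i 0) ((x i - xs i) * YGhi j i 0)) := h
      _ = _ := by
          rw [Finset.sum_add_distrib, Finset.sum_comm]
          simp [Finset.mul_sum]
  have hH := (hgradH x hxT 0 hϱ).2
  have hHlt : max (Hlo x 0 - Hlo xs 0) (Hhi x 0 - Hhi xs 0) < 0 := by
    obtain ⟨h1, h2⟩ := hxlt 0 hϱ
    exact max_lt (by linarith) (by linarith)
  have hY : ∀ j, κ j * (∑ i, max ((x i - xs i) * YGlo j i 0) ((x i - xs i) * YGhi j i 0)) ≤ 0 := by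
    intro j
    rcases hcs j with h0 | hz
    · simp [h0]
    · have hgy := (hgradY j x hxT 0 hϱ).2
      obtain ⟨hz1, hz2⟩ := hz 0 hϱ
      obtain ⟨hf1, hf2⟩ := hxfeas j 0 hϱ
      have hle : (∑ i, max ((x i - xs i) * YGlo j i 0) ((x i - xs i) * YGhi j i 0)) ≤ 0 := by
        refine hgy.trans ?_
        rw [hz1, hz2]
        exact max_le (by linarith) (by linarith)
      exact mul_nonpos_of_nonneg_of_nonpos (hκ j) hle
  have hYsum : (∑ j, κ j * ∑ i, max ((x i - xs i) * YGlo j i 0) ((x i - xs i) * YGhi j i 0)) ≤ 0 :=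
    Finset.sum_nonpos fun j _ => hY j
  linarith
end

section
/- Gradient inequality for convex interval-valued functions: let F : T → 𝕀(ℝ) be an interval-valued function on a convex open T ⊆ ℝⁿ, F(x) = [F̲(x), F̄(x)], which is gH-differentiable (the limit (1/ϑ)(F(x+ϑd) ⊖_gH F(x)) exists as ϑ → 0⁺, in Hausdorff distance) and convex in the sense F(ϑx₁+(1−ϑ)x₂) ⪯≦_LU ϑF(x₁)+(1−ϑ)F(x₂). Then for all x₁, x₂ ∈ T: (x₂−x₁)ᵀ∇F(x₁) ⪯≦_LU F(x₂) ⊖_gH F(x₁). -/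
open Set Filter Topology

/-- gradient inequality for convex interval-valued functions. If
`F = [F̲, F̄] : T → 𝕀(ℝ)` is gH-differentiable on an open convex `T` (the gH
difference quotients converge endpointwise, equivalently in Hausdorff distance, to
the interval `dᵀ∇F(x)`) and convex (`F(ϑx₁+(1-ϑ)x₂) ⪯≦_LU ϑF(x₁)+(1-ϑ)F(x₂)`),
then `(x₂-x₁)ᵀ∇F(x₁) ⪯≦_LU F(x₂) ⊖_gH F(x₁)` for all `x₁, x₂ ∈ T`. -/
theorem interval_convex_gradient_inequality {n : ℕ} (T : Set (Fin n → ℝ))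
    (hTo : IsOpen T) (hTc : Convex ℝ T)
    (Flo Fhi : (Fin n → ℝ) → ℝ) (hF : ∀ x ∈ T, Flo x ≤ Fhi x)
    (Glo Ghi : (Fin n → ℝ) → Fin n → ℝ)
    (hG : ∀ x ∈ T, ∀ i, Glo x i ≤ Ghi x i)
    -- gH-differentiability of F on T
    (hdiff : ∀ x ∈ T, ∀ d : Fin n → ℝ,
      Tendsto (fun ϑ : ℝ =>
          (1/ϑ) * min (Flo (x + ϑ • d) - Flo x) (Fhi (x + ϑ • d) - Fhi x))
        (𝓝[>] 0) (𝓝 (∑ i, min (d i * Glo x i) (d i * Ghi x i))) ∧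
      Tendsto (fun ϑ : ℝ =>
          (1/ϑ) * max (Flo (x + ϑ • d) - Flo x) (Fhi (x + ϑ • d) - Fhi x))
        (𝓝[>] 0) (𝓝 (∑ i, max (d i * Glo x i) (d i * Ghi x i))))
    -- convexity of F in the ⪯≦_LU sense
    (hconv : ∀ x₁ ∈ T, ∀ x₂ ∈ T, ∀ ϑ ∈ Ioo (0:ℝ) 1,
      Flo (ϑ • x₁ + (1-ϑ) • x₂) ≤ ϑ * Flo x₁ + (1-ϑ) * Flo x₂ ∧
      Fhi (ϑ • x₁ + (1-ϑ) • x₂) ≤ ϑ * Fhi x₁ + (1-ϑ) * Fhi x₂) :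
    ∀ x₁ ∈ T, ∀ x₂ ∈ T,
      (∑ i, min ((x₂ i - x₁ i) * Glo x₁ i) ((x₂ i - x₁ i) * Ghi x₁ i)) ≤
        min (Flo x₂ - Flo x₁) (Fhi x₂ - Fhi x₁) ∧
      (∑ i, max ((x₂ i - x₁ i) * Glo x₁ i) ((x₂ i - x₁ i) * Ghi x₁ i)) ≤
        max (Flo x₂ - Flo x₁) (Fhi x₂ - Fhi x₁) := by
  intro x₁ hx₁ x₂ hx₂
  set d : Fin n → ℝ := x₂ - x₁ with hd
  obtain ⟨h1, h2⟩ := hdiff x₁ hx₁ d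
  have hkey : ∀ ϑ ∈ Ioo (0:ℝ) 1,
      Flo (x₁ + ϑ • d) - Flo x₁ ≤ ϑ * (Flo x₂ - Flo x₁) ∧
      Fhi (x₁ + ϑ • d) - Fhi x₁ ≤ ϑ * (Fhi x₂ - Fhi x₁) := by
    intro ϑ hϑ
    have hc := hconv x₂ hx₂ x₁ hx₁ ϑ hϑ
    have heq : ϑ • x₂ + (1 - ϑ) • x₁ = x₁ + ϑ • d := by
      funext i; simp [hd]; ring
    rw [heq] at hc
    constructor <;> nlinarith [hc.1, hc.2]
  have hev : ∀ᶠ ϑ in 𝓝[>] (0:ℝ), ϑ ∈ Ioo (0:ℝ) 1 := by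
    have : Ioo (0:ℝ) 1 ∈ 𝓝[>] (0:ℝ) := Ioo_mem_nhdsGT_of_mem (by simp)
    exact this
  constructor
  · refine le_of_tendsto h1 ?_
    filter_upwards [hev] with ϑ hϑ
    obtain ⟨ha, hb⟩ := hkey ϑ hϑ
    have hϑ0 : 0 < ϑ := hϑ.1
    have : min (Flo (x₁ + ϑ • d) - Flo x₁) (Fhi (x₁ + ϑ • d) - Fhi x₁)
        ≤ ϑ * min (Flo x₂ - Flo x₁) (Fhi x₂ - Fhi x₁) := by
      rcases le_total (Flo x₂ - Flo x₁) (Fhi x₂ - Fhi x₁) with h | h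
      · exact le_trans (min_le_left _ _) (by rw [min_eq_left h]; exact ha)
      · exact le_trans (min_le_right _ _) (by rw [min_eq_right h]; exact hb)
    rw [div_mul_eq_mul_div, one_mul, div_le_iff₀ hϑ0, mul_comm]
    simpa [hd] using this
  · refine le_of_tendsto h2 ?_
    filter_upwards [hev] with ϑ hϑ
    obtain ⟨ha, hb⟩ := hkey ϑ hϑ
    have hϑ0 : 0 < ϑ := hϑ.1
    have : max (Flo (x₁ + ϑ • d) - Flo x₁) (Fhi (x₁ + ϑ • d) - Fhi x₁)
        ≤ ϑ * max (Flo x₂ - Flo x₁) (Fhi x₂ - Fhi x₁) := by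
      apply max_le
      · exact le_trans ha (by nlinarith [le_max_left (Flo x₂ - Flo x₁) (Fhi x₂ - Fhi x₁)])
      · exact le_trans hb (by nlinarith [le_max_right (Flo x₂ - Flo x₁) (Fhi x₂ - Fhi x₁)])
    rw [div_mul_eq_mul_div, one_mul, div_le_iff₀ hϑ0, mul_comm]
    simpa [hd] using this
end
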